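/- Let x be a root of the polynomial X³ − X² + 1 with positive imaginary part, and set u = x², v = x² − x + 1, w = x² − x + 1. Then u, v, w all lie in ℂ \ {0,1}, all have positive imaginary part, and they satisfy the gluing equations of the 5₂ knot complement: writing u' = 1/(1−u), u'' = 1−1/u and similarly for v, w, one has u'·u''·v·v'·(w')²·w'' = 1, u·u''·v'·v''·w² = 1, and u·u'·v·v''·w'' = 1, together with the cusp equations w⁻¹·u' = 1 and w'·u'·u·v'·w·w''·u'·w'·w·v'·u·u''·v' = 1. -/

import Mathlib

set_option maxHeartbeats 1600000

/-- for `x` the root of `X³ − X² + 1` with positive imaginary part and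
`u = x²`, `v = w = x² − x + 1`, the cross-ratios `u, v, w` lie in `ℂ \ {0,1}`, have
positive imaginary part, and satisfy the gluing and cusp equations of the `5₂` knot
complement. -/
theorem gluing_equations_five_two (x : ℂ) (hx : x ^ 3 - x ^ 2 + 1 = 0)
    (him : 0 < x.im) :
    let u : ℂ := x ^ 2
    let v : ℂ := x ^ 2 - x + 1
    let w : ℂ := x ^ 2 - x + 1
    let u' : ℂ := 1 / (1 - u)
    let u'' : ℂ := 1 - 1 / u
    let v' : ℂ := 1 / (1 - v)
    let v'' : ℂ := 1 - 1 / v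
    let w' : ℂ := 1 / (1 - w)
    let w'' : ℂ := 1 - 1 / w
    (u ≠ 0 ∧ u ≠ 1 ∧ v ≠ 0 ∧ v ≠ 1 ∧ w ≠ 0 ∧ w ≠ 1) ∧
    (0 < u.im ∧ 0 < v.im ∧ 0 < w.im) ∧
    (u' * u'' * v * v' * w' ^ 2 * w'' = 1 ∧
      u * u'' * v' * v'' * w ^ 2 = 1 ∧
      u * u' * v * v'' * w'' = 1) ∧
    (w⁻¹ * u' = 1 ∧
      w' * u' * u * v' * w * w'' * u' * w' * w * v' * u * u'' * v' = 1) := by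
  intro u v w u' u'' v' v'' w' w''
  set a := x.re with ha_def
  set b := x.im with hb_def
  have hxc : x = Complex.mk a b := rfl
  have hre : a ^ 3 - 3 * a * b ^ 2 - a ^ 2 + b ^ 2 + 1 = 0 := by
    have := congrArg Complex.re hx
    simp only [hxc, Complex.sub_re, Complex.add_re, Complex.one_re, Complex.zero_re,
      pow_succ, pow_zero, one_mul, Complex.mul_re, Complex.mul_im] at this
    ring_nf at this ⊢
    linarith [this]
  have him' : b ^ 2 = 3 * a ^ 2 - 2 * a := by
    have h2 := congrArg Complex.im hx
    simp only [hxc, Complex.sub_im, Complex.add_im, Complex.one_im, Complex.zero_im,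
      pow_succ, pow_zero, one_mul, Complex.mul_re, Complex.mul_im] at h2
    have h2' : b * (3 * a ^ 2 - b ^ 2 - 2 * a) = 0 := by linear_combination h2
    rcases mul_eq_zero.mp h2' with h | h
    · exact absurd h (ne_of_gt him)
    · linarith
  have ha3 : 2 * a * (2 * a - 1) ^ 2 = 1 := by
    linear_combination -hre + (1 - 3 * a) * him'
  have ha0 : 0 < a := by nlinarith [sq_nonneg (2 * a - 1)]
  have ha12 : 1 / 2 < a := by nlinarith [sq_nonneg (2 * a - 1), sq_nonneg a]
  have hbpos : 0 < b := him
  have hui : u.im = 2 * a * b := by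
    show (x ^ 2).im = _
    rw [hxc]; simp [pow_two, Complex.mul_im]; ring
  have hvi : v.im = (2 * a - 1) * b := by
    show (x ^ 2 - x + 1).im = _
    rw [hxc]; simp [pow_two, Complex.mul_im, Complex.sub_im, Complex.add_im]; ring
  have huim : 0 < u.im := by rw [hui]; positivity
  have hvim : 0 < v.im := by rw [hvi]; nlinarith
  have hu0 : u ≠ 0 := by intro h; rw [h] at huim; simp at huim
  have hu1 : u ≠ 1 := by intro h; rw [h] at huim; simp at huim
  have hv0 : v ≠ 0 := by intro h; rw [h] at hvim; simp at hvim
  have hv1 : v ≠ 1 := by intro h; rw [h] at hvim; simp at hvim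
  have hu1' : (1 : ℂ) - u ≠ 0 := fun h => hu1 (by linear_combination -h)
  have hv1' : (1 : ℂ) - v ≠ 0 := fun h => hv1 (by linear_combination -h)
  refine ⟨⟨hu0, hu1, hv0, hv1, hv0, hv1⟩, ⟨huim, hvim, hvim⟩, ⟨?_, ?_, ?_⟩, ?_, ?_⟩
  · show 1 / (1 - u) * (1 - 1 / u) * v * (1 / (1 - v)) * (1 / (1 - v)) ^ 2 * (1 - 1 / v) = 1
    field_simp
    linear_combination (x - x^2 - x^4 + 2*x^6 - x^7) * hx
  · show u * (1 - 1 / u) * (1 / (1 - v)) * (1 - 1 / v) * v ^ 2 = 1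
    field_simp
    linear_combination (-x^2 + x^3) * hx
  · show u * (1 / (1 - u)) * v * (1 - 1 / v) * (1 - 1 / v) = 1
    field_simp
    linear_combination (-1 + x - x^2 + x^3) * hx
  · show v⁻¹ * (1 / (1 - u)) = 1
    field_simp
    linear_combination x * hx
  · show 1 / (1 - v) * (1 / (1 - u)) * u * (1 / (1 - v)) * v * (1 - 1 / v) * (1 / (1 - u)) *
      (1 / (1 - v)) * v * (1 / (1 - v)) * u * (1 - 1 / u) * (1 / (1 - v)) = 1
    field_simp
    linear_combination (x^3 - 2*x^4 + x^5 + 3*x^6 - 7*x^7 + 3*x^8 + 4*x^9 - 4*x^10 + x^11) * hx
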